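/- In any execution of the OTM abstract machine, a thread running inside a transaction can read or write a location only if, as a result of the transition, that location is claimed by its transaction: after any Read1, Read2, Write1, or Write2 transition performed by a thread of transaction k on location r, the working memory Δ of the resulting state maps r to a pair (M, j) where j is the (possibly merged) transaction name of that thread in the resulting state. Consequently, at any point of an execution, at most one active transaction issues operations on any given location. -/

import Mathlib

/-!  A formalisation of the OTM (Open Transactional Memory) abstract machine
     of "Open Transactional Memory" (Figures 3–8), together with
     Guerraoui–Kapałka style histories and opacity graphs. -/

abbrev Loc : Type := ℕ
abbrev TrName : Type := ℕ
abbrev TId : Type := ℕ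

/-- Terms of the Haskell-like language with the OTM primitives (Fig. 3). -/
inductive Term : Type where
  | var : ℕ → Term
  | app : Term → Term → Term
  | lam : ℕ → Term → Term
  | loc : Loc → Term
  | tidT : TId → Term
  | chr : Char → Term
  | unit : Term
  | ret : Term → Term
  | bind : Term → Term → Term
  | throw : Term → Term
  | catchE : Term → Term → Term
  | putChar : Char → Term
  | getChar : Term
  | fork : Term → Term
  | atomic : Term → Term
  | isolated : Term → Term
  | retry : Term
  | orElse : Term → Term → Term
  | newOTVar : Term → Term
  | readOTVar : Loc → Term
  | writeOTVar : Loc → Term → Term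
  deriving DecidableEq

/-- Values (Fig. 3): everything except variables and applications. -/
def Term.isValue : Term → Bool
  | .var _ => false
  | .app _ _ => false
  | _ => true

/-- Pure term reductions `M → N` (Fig. 4), parameterised by the
    (otherwise unspecified) evaluation function `𝒱`. -/
inductive TermStep (V : Term → Option Term) : Term → Term → Prop where
  | eval {M N : Term} :
      M.isValue = false → V M = some N → N.isValue = true → TermStep V M N
  | bindVal {M N : Term} : TermStep V (.bind (.ret M) N) (.app N M)
  | bindRetry {M : Term} : TermStep V (.bind .retry M) .retry
  | bindThrow {M N : Term} : TermStep V (.bind (.throw N) M) (.throw N)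
  | catchRetry {M : Term} : TermStep V (.catchE .retry M) .retry
  | catchRet {M N : Term} : TermStep V (.catchE (.ret N) M) (.ret N)
  | catchThrow {M N : Term} : TermStep V (.catchE (.throw M) N) (.app N M)

/-- Evaluation contexts `𝔼 ::= [] | 𝔼 >>= M`: a context is the list of
    the second arguments of the enclosing binds. -/
abbrev Ctx : Type := List Term

/-- `plug E M` is `𝔼[M]`. -/
def plug (E : Ctx) (M : Term) : Term := E.foldl Term.bind M

/-- Threads: `⟨M⟩_t` (outside transactions) and `⟨M; N⟩_{t,k}`
    (inside transaction `k`, with continuation `N`). -/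
inductive Thread : Type where
  | plain : TId → Term → Thread
  | tx : TId → Term → Term → TrName → Thread
  deriving DecidableEq

def Thread.tid : Thread → TId
  | .plain t _ => t
  | .tx t _ _ _ => t

/-- Thread families, presented as lists (parallel composition modulo
    permutation is built into the step relation). -/
abbrev Family : Type := List Thread

def Family.tids (P : Family) : List TId := P.map Thread.tid

/-- The names of the active transactions of a family (`transactions(P)`). -/
def Family.txNames (P : Family) : List TrName :=
  P.filterMap fun T =>
    match T with
    | .tx _ _ _ k => some k
    | .plain _ _ => none

/-- The forest `Ψ` of thread identifiers. -/
structure Psi : Type where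
  nodes : Set TId
  parent : TId → Option TId

def Psi.addRoot (ψ : Psi) (t : TId) : Psi :=
  ⟨insert t ψ.nodes, ψ.parent⟩

/-- `add_child(t, t', Ψ)`. -/
def Psi.addChild (ψ : Psi) (t t' : TId) : Psi :=
  ⟨insert t' ψ.nodes, fun u => if u = t' then some t else ψ.parent u⟩

/-- `ψ.rootOf t r` : `r = root(t, Ψ)`. -/
def Psi.rootOf (ψ : Psi) (t r : TId) : Prop :=
  Relation.ReflTransGen (fun a b => ψ.parent a = some b) t r ∧ ψ.parent r = none

open Classical in
/-- `remove(r, Ψ)`: remove the whole tree rooted at `r`. -/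
noncomputable def Psi.remove (ψ : Psi) (r : TId) : Psi :=
  ⟨{t ∈ ψ.nodes | ¬ ψ.rootOf t r}, fun t => if ψ.rootOf t r then none else ψ.parent t⟩

/-- The memory `Σ = ⟨Θ, Δ, Ψ⟩` (together with the supply `used` of
    transaction names already used, guaranteeing freshness of new names). -/
structure Mem : Type where
  heap : Loc → Option Term
  work : Loc → Option (Term × TrName)
  psi : Psi
  used : Set TrName

/-- Machine states `(Σ; P)`. -/
structure MState : Type where
  mem : Mem
  threads : Family

/-- Pointwise update of a partial function. -/
def updFn {α : Type} (f : Loc → Option α) (r : Loc) (v : α) : Loc → Option α :=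
  fun s => if s = r then some v else f s

/-- `Δ[k ↦ j]` : rename every claim of transaction `k` into `j` (Fig. 8). -/
def renameWork (Δ : Loc → Option (Term × TrName)) (k j : TrName) :
    Loc → Option (Term × TrName) :=
  fun r => (Δ r).map fun p => if p.2 = k then (p.1, j) else p

def Thread.renameTx (T : Thread) (k j : TrName) : Thread :=
  match T with
  | .tx t M N k' => if k' = k then .tx t M N j else .tx t M N k'
  | .plain t M => .plain t M

/-- `P[k ↦ j]` (Fig. 8). -/
def Family.renameTx (P : Family) (k j : TrName) : Family :=
  P.map (Thread.renameTx · k j)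

/-- `cleanup(k, Σ)` (Fig. 8). -/
def cleanup (k : TrName) (Δ : Loc → Option (Term × TrName)) :
    Loc → Option (Term × TrName) := fun r =>
  match Δ r with
  | some (M, k') => if k' = k then none else some (M, k')
  | none => none

/-- `commit(k, Σ)` (Fig. 8). -/
def commitMem (k : TrName) (Θ : Loc → Option Term)
    (Δ : Loc → Option (Term × TrName)) : Loc → Option Term := fun r =>
  match Δ r with
  | some (M, k') => if k' = k then some M else Θ r
  | none => Θ r

/-- `leak(k, Σ)` (Fig. 8). -/
def leakMem (k : TrName) (Θ : Loc → Option Term)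
    (Δ : Loc → Option (Term × TrName)) : Loc → Option Term := fun r =>
  match Θ r with
  | some M => some M
  | none =>
    match Δ r with
    | some (M, k') => if k' = k then some M else none
    | none => none

/-- Operations recorded in histories (reads, writes, commits, aborts and,
    for OTM, explicit merges of one transaction into another). -/
inductive Op : Type where
  | read : TrName → Loc → Term → Op
  | write : TrName → Loc → Term → Op
  | commit : TrName → Op
  | abort : TrName → Op
  | merge : TrName → TrName → Op
  deriving DecidableEq

/-- Histories: time-ordered sequences of operations. -/
abbrev History : Type := List Op

/-- Transition labels `β` (Figs. 5–7). -/
inductive Label : Type where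
  | tau : Label
  | inpC : Char → Label
  | outC : Char → Label
  | newT : TrName → Label
  | co : TrName → Label
  | ab : TrName → TId → Term → Label
  | abBar : TrName → TId → Term → Label
  deriving DecidableEq

/-- `transaction(β)` (Fig. 8). -/
def Label.txName : Label → Option TrName
  | .newT k => some k
  | .co k => some k
  | .ab k _ _ => some k
  | .abBar k _ _ => some k
  | _ => none

mutual
  /-- The state transitions `(Σ; P) --β--> (Σ'; P')` of the OTM abstract
      machine (Figs. 5, 6 and 7), instrumented with the list of history
      operations the transition issues. -/
  inductive Step (V : Term → Option Term) :
      MState → Label → List Op → MState → Prop where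
    /- structural congruence: `∥` is commutative and associative -/
    | permC {m m' : Mem} {P Q P' Q' : Family} {β : Label} {ops : List Op} :
        List.Perm P Q → List.Perm P' Q' →
        Step V ⟨m, P⟩ β ops ⟨m', P'⟩ → Step V ⟨m, Q⟩ β ops ⟨m', Q'⟩
    /- IO transitions (Fig. 5) -/
    | inChar {m : Mem} {P : Family} {E : Ctx} {t : TId} {c : Char} :
        Step V ⟨m, .plain t (plug E .getChar) :: P⟩ (.inpC c) []
               ⟨m, .plain t (plug E (.ret (.chr c))) :: P⟩
    | outChar {m : Mem} {P : Family} {E : Ctx} {t : TId} {c : Char} :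
        Step V ⟨m, .plain t (plug E (.putChar c)) :: P⟩ (.outC c) []
               ⟨m, .plain t (plug E (.ret .unit)) :: P⟩
    | termIO {m : Mem} {P : Family} {E : Ctx} {t : TId} {M N : Term} :
        TermStep V M N →
        Step V ⟨m, .plain t (plug E M) :: P⟩ .tau []
               ⟨m, .plain t (plug E N) :: P⟩
    | forkIO {m : Mem} {P : Family} {E : Ctx} {t t' : TId} {M : Term} :
        t' ∉ Family.tids (.plain t (plug E (.fork M)) :: P) →
        Step V ⟨m, .plain t (plug E (.fork M)) :: P⟩ .tau []
               ⟨{m with psi := m.psi.addRoot t'},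
                .plain t (plug E (.ret (.tidT t'))) :: .plain t' M :: P⟩
    /- transactional τ-transitions (Fig. 6) -/
    | termT {m : Mem} {P : Family} {E : Ctx} {t : TId} {k : TrName} {M M' N : Term} :
        TermStep V M M' →
        Step V ⟨m, .tx t (plug E M) N k :: P⟩ .tau []
               ⟨m, .tx t (plug E M') N k :: P⟩
    | forkT {m : Mem} {P : Family} {E : Ctx} {t t' : TId} {k : TrName} {M N : Term} :
        t' ∉ Family.tids (.tx t (plug E (.fork M)) N k :: P) →
        Step V ⟨m, .tx t (plug E (.fork M)) N k :: P⟩ .tau []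
               ⟨{m with psi := m.psi.addChild t t'},
                .tx t (plug E (.ret (.tidT t'))) N k :: .tx t' M (.ret .unit) k :: P⟩
    | newVar {m : Mem} {P : Family} {E : Ctx} {t : TId} {k : TrName} {M N : Term} {r : Loc} :
        m.heap r = none → m.work r = none →
        Step V ⟨m, .tx t (plug E (.newOTVar M)) N k :: P⟩ .tau [.write k r M]
               ⟨{m with work := updFn m.work r (M, k)},
                .tx t (plug E (.ret (.loc r))) N k :: P⟩
    | read1 {m : Mem} {P : Family} {E : Ctx} {t : TId} {k : TrName} {M N : Term} {r : Loc} :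
        m.work r = none → m.heap r = some M →
        Step V ⟨m, .tx t (plug E (.readOTVar r)) N k :: P⟩ .tau [.read k r M]
               ⟨{m with work := updFn m.work r (M, k)},
                .tx t (plug E (.ret M)) N k :: P⟩
    | read2 {m : Mem} {P : Family} {E : Ctx} {t : TId} {k j : TrName} {M N : Term} {r : Loc} :
        m.work r = some (M, j) →
        Step V ⟨m, .tx t (plug E (.readOTVar r)) N k :: P⟩ .tau
               (if k = j then [.read k r M] else [.merge k j, .read j r M])
               ⟨{m with work := renameWork m.work k j},
                Family.renameTx (.tx t (plug E (.ret M)) N k :: P) k j⟩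
    | write1 {m : Mem} {P : Family} {E : Ctx} {t : TId} {k : TrName} {M N : Term} {r : Loc} :
        m.work r = none →
        Step V ⟨m, .tx t (plug E (.writeOTVar r M)) N k :: P⟩ .tau [.write k r M]
               ⟨{m with work := updFn m.work r (M, k)},
                .tx t (plug E (.ret .unit)) N k :: P⟩
    | write2 {m : Mem} {P : Family} {E : Ctx} {t : TId} {k j : TrName} {M M₀ N : Term} {r : Loc} :
        m.work r = some (M₀, j) →
        Step V ⟨m, .tx t (plug E (.writeOTVar r M)) N k :: P⟩ .tau
               (if k = j then [.write k r M] else [.merge k j, .write j r M])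
               ⟨{m with work := updFn (renameWork m.work k j) r (M, j)},
                Family.renameTx (.tx t (plug E (.ret .unit)) N k :: P) k j⟩
    | orElse1 {m m' : Mem} {P Q₁ Q₂ : Family} {E : Ctx} {t : TId} {k j : TrName}
        {M M' N N' R : Term} {ops : List Op} :
        (R = .ret N' ∨ R = .throw N') →
        StepTauStar V ⟨m, .tx t M (.ret .unit) k :: P⟩ ops
                       ⟨m', Q₁ ++ .tx t R (.ret .unit) j :: Q₂⟩ →
        Step V ⟨m, .tx t (plug E (.orElse M M')) N k :: P⟩ .tau ops
               ⟨m', Q₁ ++ .tx t (plug E R) N j :: Q₂⟩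
    | orElse2 {m m' : Mem} {P Q₁ Q₂ : Family} {E : Ctx} {t : TId} {k j : TrName}
        {M M' N : Term} {ops : List Op} :
        StepTauStar V ⟨m, .tx t M (.ret .unit) k :: P⟩ ops
                       ⟨m', Q₁ ++ .tx t .retry (.ret .unit) j :: Q₂⟩ →
        Step V ⟨m, .tx t (plug E (.orElse M M')) N k :: P⟩ .tau []
               ⟨m, .tx t (plug E M') N k :: P⟩
    | isolatedR {m m' : Mem} {P Q₁ Q₂ : Family} {E : Ctx} {t : TId} {k j : TrName}
        {M N N' R : Term} {ops : List Op} :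
        (R = .ret N' ∨ R = .throw N') →
        StepTauStar V ⟨m, .tx t M (.ret .unit) k :: P⟩ ops
                       ⟨m', Q₁ ++ .tx t R (.ret .unit) j :: Q₂⟩ →
        Step V ⟨m, .tx t (plug E (.isolated M)) N k :: P⟩ .tau ops
               ⟨m', Q₁ ++ .tx t (plug E R) N j :: Q₂⟩
    /- transaction management transitions (Fig. 7) -/
    | newTx {m : Mem} {t : TId} {M N : Term} {k : TrName} :
        k ∉ m.used →
        Step V ⟨m, [.plain t (.bind (.atomic M) N)]⟩ (.newT k) []
               ⟨{m with used := insert k m.used}, [.tx t M N k]⟩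
    | commitTx {m : Mem} {t : TId} {M N : Term} {k : TrName} :
        Step V ⟨m, [.tx t (.ret M) N k]⟩ (.co k) [.commit k]
               ⟨{m with heap := commitMem k m.heap m.work,
                        work := cleanup k m.work},
                [.plain t (.bind (.ret M) N)]⟩
    | abort1 {m : Mem} {t : TId} {M N : Term} {k : TrName} {r : TId} :
        m.psi.rootOf t r →
        Step V ⟨m, [.tx t (.throw M) N k]⟩ (.ab k t M) [.abort k]
               ⟨{m with heap := leakMem k m.heap m.work,
                        work := cleanup k m.work,
                        psi := m.psi.remove r},
                [.plain t (.bind (.throw M) N)]⟩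
    | abort2 {m : Mem} {t t' : TId} {M M' N : Term} {k : TrName} {r : TId} :
        m.psi.rootOf t r → m.psi.rootOf t' r →
        Step V ⟨m, [.tx t' M' N k]⟩ (.abBar k t M) []
               ⟨{m with heap := leakMem k m.heap m.work,
                        work := cleanup k m.work,
                        psi := m.psi.remove r},
                [.plain t' (.bind (.throw M) N)]⟩
    | abort3 {m : Mem} {t t' : TId} {M M' N : Term} {k : TrName} {r : TId} :
        m.psi.rootOf t r → ¬ m.psi.rootOf t' r →
        Step V ⟨m, [.tx t' M' N k]⟩ (.abBar k t M) []
               ⟨{m with heap := leakMem k m.heap m.work,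
                        work := cleanup k m.work,
                        psi := m.psi.remove r},
                [.plain t' .retry]⟩
    | mcastAb {m m' : Mem} {P P' Q Q' : Family} {k : TrName} {t : TId} {M : Term}
        {ops₁ ops₂ : List Op} :
        Step V ⟨m, P⟩ (.ab k t M) ops₁ ⟨m', P'⟩ →
        Step V ⟨m, Q⟩ (.abBar k t M) ops₂ ⟨m', Q'⟩ →
        Step V ⟨m, P ++ Q⟩ (.ab k t M) (ops₁ ++ ops₂) ⟨m', P' ++ Q'⟩
    | mcastCo {m m' : Mem} {P P' Q Q' : Family} {k : TrName} {ops₁ ops₂ : List Op} :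
        Step V ⟨m, P⟩ (.co k) ops₁ ⟨m', P'⟩ →
        Step V ⟨m, Q⟩ (.co k) ops₂ ⟨m', Q'⟩ →
        Step V ⟨m, P ++ Q⟩ (.co k) ((ops₁ ++ ops₂).dedup) ⟨m', P' ++ Q'⟩
    | mcastGroup {m m' : Mem} {P P' Q : Family} {β : Label} {k : TrName} {ops : List Op} :
        Step V ⟨m, P⟩ β ops ⟨m', P'⟩ →
        β.txName = some k → k ∉ Family.txNames Q →
        Step V ⟨m, P ++ Q⟩ β ops ⟨m', P' ++ Q⟩

  /-- Reflexive-transitive closure of internal (`τ`) transitions,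
      accumulating the issued operations. -/
  inductive StepTauStar (V : Term → Option Term) :
      MState → List Op → MState → Prop where
    | refl (s : MState) : StepTauStar V s [] s
    | cons {s₁ s₂ s₃ : MState} {ops₁ ops₂ : List Op} :
        Step V s₁ .tau ops₁ s₂ → StepTauStar V s₂ ops₂ s₃ →
        StepTauStar V s₁ (ops₁ ++ ops₂) s₃
end

/-- Executions of the abstract machine, together with the history
    (sequence of issued operations) they generate. -/
inductive Exec (V : Term → Option Term) : MState → History → MState → Prop where
  | refl (s : MState) : Exec V s [] s
  | step {s₁ s₂ s₃ : MState} {β : Label} {ops : List Op} {H : History} :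
      Step V s₁ β ops s₂ → Exec V s₂ H s₃ → Exec V s₁ (ops ++ H) s₃

/-- The initial state of an OTM program `M` run by a main thread `t`. -/
def initState (M : Term) (t : TId) : MState :=
  ⟨⟨fun _ => none, fun _ => none, ⟨{t}, fun _ => none⟩, ∅⟩, [.plain t M]⟩

/-- `H` is a history describing an execution of an OTM program. -/
def OTMHistory (H : History) : Prop :=
  ∃ (V : Term → Option Term) (M : Term) (t : TId) (s : MState),
    Exec V (initState M t) H s

/-! ### Histories, local operations and opacity graphs (Guerraoui–Kapałka) -/

/-- The transaction issuing an operation. -/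
def Op.tx : Op → TrName
  | .read k _ _ => k
  | .write k _ _ => k
  | .commit k => k
  | .abort k => k
  | .merge k _ => k

def Op.loc? : Op → Option Loc
  | .read _ r _ => some r
  | .write _ r _ => some r
  | _ => none

def Op.isWrite : Op → Bool
  | .write _ _ _ => true
  | _ => false

/-- `op` is an operation by transaction `k` on location `r`. -/
def Op.touches (op : Op) (k : TrName) (r : Loc) : Bool :=
  op.tx == k && op.loc? == some r

/-- The transactions occurring in a history. -/
def History.txs (H : History) : List TrName :=
  H.flatMap fun op =>
    match op with
    | .merge k j => [k, j]
    | op => [op.tx]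

/-- The last operation by `k` on `r` strictly before position `i`. -/
def History.prevOn (H : History) (k : TrName) (r : Loc) (i : ℕ) : Option Op :=
  ((H.take i).filter (fun op => op.touches k r)).getLast?

/-- The first operation by `k` on `r` strictly after position `i`. -/
def History.nextOn (H : History) (k : TrName) (r : Loc) (i : ℕ) : Option Op :=
  ((H.drop (i + 1)).filter (fun op => op.touches k r)).head?

/-- The operation at position `i` of `H` is local: a read whose previous
    operation by the same transaction on the same location is a write, or a
    write whose next operation by the same transaction on the same location
    is a write. -/
def History.localIdx (H : History) (i : ℕ) : Bool :=
  match H[i]? with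
  | some (.read k r _) =>
    match H.prevOn k r i with
    | some op => op.isWrite
    | none => false
  | some (.write k r _) =>
    match H.nextOn k r i with
    | some op => op.isWrite
    | none => false
  | _ => false

/-- `nonlocal(H)`: the longest sub-history of `H` without local operations. -/
def History.nonlocal (H : History) : History :=
  ((List.range H.length).filter (fun i => ! H.localIdx i)).filterMap
    (fun i => H[i]?)

def History.committed (H : History) (k : TrName) : Prop := Op.commit k ∈ H

def History.aborted (H : History) (k : TrName) : Prop := Op.abort k ∈ H

/-- A vertex/transaction is red iff it is running or aborted,
    i.e. not committed. -/
def History.red (H : History) (k : TrName) : Prop := ¬ H.committed k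

/-- `k` is live (running) in `H`. -/
def History.live (H : History) (k : TrName) : Prop :=
  k ∈ H.txs ∧ ¬ H.committed k ∧ ¬ H.aborted k

/-- `a ≺_H b`: `a` becomes committed or aborted in `H` before `b` issues
    its first operation. -/
def History.happensBefore (H : History) (a b : TrName) : Prop :=
  ∃ i, (H[(i : ℕ)]? = some (.commit a) ∨ H[(i : ℕ)]? = some (.abort a)) ∧
    ∀ j op, H[(j : ℕ)]? = some op → op.tx = b → i < j

/-- `k` reads (the value of) location `r` from `k'` in `H`. -/
def History.readsFromAt (H : History) (k k' : TrName) (r : Loc) : Prop :=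
  ∃ i j v, i < j ∧
    H[(i : ℕ)]? = some (.write k' r v) ∧
    H[(j : ℕ)]? = some (.read k r v) ∧
    ∀ l op, i < l → l < j → H[(l : ℕ)]? = some op →
      op.isWrite = true → op.loc? ≠ some r

/-- `k` reads something written by `k'` (merges are dependencies of this
    kind: a merge amounts to reading a fresh location written by `k'`). -/
def History.readsFrom (H : History) (k k' : TrName) : Prop :=
  (∃ r, H.readsFromAt k k' r) ∨ Op.merge k k' ∈ H

/-- The edge relation of the opacity graph `OPG(H, ≪)` (cases (a)–(d)). -/
def OPGEdge (H : History) (lt : TrName → TrName → Prop) (k k' : TrName) : Prop :=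
  H.happensBefore k' k
  ∨ H.readsFrom k k'
  ∨ (lt k' k ∧ ∃ r, (∃ v, Op.read k' r v ∈ H) ∧ (∃ v, Op.write k r v ∈ H))
  ∨ (H.committed k' ∧
      ∃ r k'', lt k' k'' ∧ (∃ v, Op.write k' r v ∈ H) ∧ H.readsFromAt k'' k r)

/-- An edge of `OPG(H, ≪)` is red iff case (b) applies. -/
def OPGRedEdge (H : History) (k k' : TrName) : Prop := H.readsFrom k k'

/-- `OPG(H, ≪)` is well-formed: all edges leaving red vertices are red. -/
def OPGWellFormed (H : History) (lt : TrName → TrName → Prop) : Prop :=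
  ∀ k k', OPGEdge H lt k k' → H.red k → OPGRedEdge H k k'

/-- `OPG(H, ≪)` is acyclic. -/
def OPGAcyclic (H : History) (lt : TrName → TrName → Prop) : Prop :=
  ∀ k, ¬ Relation.TransGen (OPGEdge H lt) k k

/-- `lt` is a total order on the transactions of `H`. -/
def TotalOrderOn (H : History) (lt : TrName → TrName → Prop) : Prop :=
  (∀ k, ¬ lt k k) ∧ (∀ a b c, lt a b → lt b c → lt a c) ∧
  (∀ k, k ∈ H.txs → ∀ k', k' ∈ H.txs → k ≠ k' → lt k k' ∨ lt k' k)

/-- `complete(H)`: `H` extended with a commit or an abort for every live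
    transaction of `H`. -/
def IsCompletion (H H' : History) : Prop :=
  ∃ C : History, H' = H ++ C ∧
    (∀ op ∈ C, (∃ k, op = Op.commit k ∨ op = Op.abort k) ∧ H.live op.tx) ∧
    (∀ k, H.live k → ∃ op ∈ C, Op.tx op = k) ∧
    C.Pairwise (fun a b => Op.tx a ≠ Op.tx b)

/-- Two histories are equivalent: same operations, and each transaction
    issues the same sequence of operations in both. -/
def EquivHist (S H : History) : Prop :=
  S.Perm H ∧ ∀ k, S.filter (fun op => op.tx == k) = H.filter (fun op => op.tx == k)

/-- A history is sequential if its happens-before relation is total. -/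
def SequentialHist (S : History) : Prop :=
  ∀ k, k ∈ S.txs → ∀ k', k' ∈ S.txs → k ≠ k' →
    S.happensBefore k k' ∨ S.happensBefore k' k

/-- Local consistency: every local read is preceded by a write (by the same
    transaction, on the same location) writing the read value. -/
def LocallyConsistent (H : History) : Prop :=
  ∀ i k r v, H[i]? = some (.read k r v) → H.localIdx i = true →
    H.prevOn k r i = some (.write k r v)

/-- Consistency of a history. -/
def Consistent (H : History) : Prop :=
  LocallyConsistent H ∧
  ∀ k r v, Op.read k r v ∈ H.nonlocal → ∃ k', Op.write k' r v ∈ H.nonlocal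

/-! ### STATEMENT 3 -/

/-- `AccessedIn P P' r j`: across the transition from thread family `P` to
    `P'`, some thread performed a read or a write of location `r`, ending up
    in transaction `j`. -/
def AccessedIn (P P' : Family) (r : Loc) (j : TrName) : Prop :=
  (∃ t E N k M, Thread.tx t (plug E (.readOTVar r)) N k ∈ P ∧
      Thread.tx t (plug E (.ret M)) N j ∈ P') ∨
  (∃ t E N k M, Thread.tx t (plug E (.writeOTVar r M)) N k ∈ P ∧
      Thread.tx t (plug E (.ret .unit)) N j ∈ P')

namespace OTMProof

/-- left spine length of binds -/
def spineLen : Term → ℕ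
  | .bind a _ => spineLen a + 1
  | _ => 0

lemma plug_nil (M : Term) : plug [] M = M := rfl
lemma plug_cons (e : Term) (E : Ctx) (M : Term) : plug (e :: E) M = plug E (.bind M e) := rfl

lemma spineLen_plug (E : Ctx) (M : Term) : spineLen (plug E M) = spineLen M + E.length := by
  induction E generalizing M with
  | nil => simp [plug_nil]
  | cons e E ih =>
    rw [plug_cons, ih]
    simp [spineLen]
    omega

lemma plug_left_inj {E : Ctx} {M N : Term} (h : plug E M = plug E N) : M = N := by
  induction E generalizing M N with
  | nil => exact h
  | cons e E ih =>
    rw [plug_cons, plug_cons] at h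
    have := ih h
    exact (Term.bind.inj this).1

lemma plug_eq_plug_aux : ∀ (E E' : Ctx) (M N : Term), E.length = E'.length →
    plug E M = plug E' N → E = E' ∧ M = N := by
  intro E
  induction E with
  | nil =>
    intro E' M N hl h
    cases E' with
    | nil => exact ⟨rfl, h⟩
    | cons e E' => simp at hl
  | cons e E ih =>
    intro E' M N hl h
    cases E' with
    | nil => simp at hl
    | cons e' E' =>
      simp at hl
      rw [plug_cons, plug_cons] at h
      obtain ⟨hE, hb⟩ := ih E' _ _ hl h
      obtain ⟨h1, h2⟩ := Term.bind.inj hb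
      exact ⟨by rw [hE, h2], h1⟩

lemma plug_eq_plug {E E' : Ctx} {M N : Term} (hM : spineLen M = 0) (hN : spineLen N = 0)
    (h : plug E M = plug E' N) : E = E' ∧ M = N := by
  have hl : E.length = E'.length := by
    have := congrArg spineLen h
    rw [spineLen_plug, spineLen_plug, hM, hN] at this
    omega
  exact plug_eq_plug_aux E E' M N hl h

lemma plug_eq_plug' {E E' : Ctx} {M N : Term} (h : plug E M = plug E' N)
    (hM : spineLen M = 0) (hN : spineLen N = 0) : E = E' ∧ M = N :=
  plug_eq_plug hM hN h

def core : Term → Term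
  | .bind a _ => core a
  | t => t

lemma core_plug (E : Ctx) (M : Term) : core (plug E M) = core M := by
  induction E generalizing M with
  | nil => rfl
  | cons e E ih =>
    rw [plug_cons, ih]
    rfl

lemma termStep_core {V : Term → Option Term} {M N : Term} (h : TermStep V M N) :
    (∀ r, core M ≠ .readOTVar r) ∧ (∀ r X, core M ≠ .writeOTVar r X) := by
  cases h with
  | eval hv _ _ =>
    cases M <;> simp [Term.isValue] at hv <;> simp [core]
  | bindVal => simp [core]
  | bindRetry => simp [core]
  | bindThrow => simp [core]
  | catchRetry => simp [core]
  | catchRet => simp [core]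
  | catchThrow => simp [core]

end OTMProof
namespace OTMProof

lemma tids_cons (T : Thread) (P : Family) : Family.tids (T :: P) = T.tid :: Family.tids P := rfl

lemma tids_append (P Q : Family) : Family.tids (P ++ Q) = Family.tids P ++ Family.tids Q :=
  List.map_append

lemma mem_tids {t : TId} {A N : Term} {k : TrName} {P : Family}
    (h : Thread.tx t A N k ∈ P) : t ∈ Family.tids P :=
  List.mem_map_of_mem h

lemma tid_unique {P : Family} (h : (Family.tids P).Nodup) {T₁ T₂ : Thread}
    (h1 : T₁ ∈ P) (h2 : T₂ ∈ P) (ht : T₁.tid = T₂.tid) : T₁ = T₂ :=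
  List.inj_on_of_nodup_map h h1 h2 ht

lemma renameTx_tx (t : TId) (A N : Term) (k k₁ j₁ : TrName) :
    Thread.renameTx (.tx t A N k) k₁ j₁ = .tx t A N (if k = k₁ then j₁ else k) := by
  by_cases h : k = k₁ <;> simp [Thread.renameTx, h]

lemma tid_renameTx (T : Thread) (k j : TrName) : (T.renameTx k j).tid = T.tid := by
  cases T with
  | plain => rfl
  | tx t A N k' => rw [renameTx_tx]; rfl

lemma tids_renameTx (P : Family) (k j : TrName) :
    Family.tids (Family.renameTx P k j) = Family.tids P := by
  simp only [Family.renameTx, Family.tids, List.map_map]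
  exact List.map_congr_left (fun T _ => tid_renameTx T k j)

lemma renameTx_cons (T : Thread) (P : Family) (k j : TrName) :
    Family.renameTx (T :: P) k j = T.renameTx k j :: Family.renameTx P k j := rfl

lemma mem_renameTx {T : Thread} {P : Family} (h : T ∈ P) (k j : TrName) :
    T.renameTx k j ∈ Family.renameTx P k j :=
  List.mem_map_of_mem h

lemma mem_txNames {t : TId} {A N : Term} {k : TrName} {Q : Family}
    (h : Thread.tx t A N k ∈ Q) : k ∈ Family.txNames Q :=
  List.mem_filterMap.mpr ⟨_, h, rfl⟩

lemma updFn_self {α : Type} (f : Loc → Option α) (r : Loc) (v : α) : updFn f r v r = some v := by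
  simp [updFn]

lemma updFn_ne {α : Type} (f : Loc → Option α) {r s : Loc} (v : α) (h : s ≠ r) :
    updFn f r v s = f s := by
  simp [updFn, h]

lemma renameWork_eq {Δ : Loc → Option (Term × TrName)} {r : Loc} {X : Term} {kc : TrName}
    (h : Δ r = some (X, kc)) (k₁ j₁ : TrName) :
    renameWork Δ k₁ j₁ r = some (X, if kc = k₁ then j₁ else kc) := by
  by_cases hc : kc = k₁ <;> simp [renameWork, h, hc]

lemma noTauTx {k₀ : TrName} (hk : (Label.tau).txName = some k₀) : False := by
  simp [Label.txName] at hk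

/-! ### The predicates of the mutual induction -/

def Pers (m : Mem) (P : Family) (m' : Mem) (P' : Family) : Prop :=
  ∀ r X k t A N, m.work r = some (X, k) → Thread.tx t A N k ∈ P →
    ∀ B N' j, Thread.tx t B N' j ∈ P' → ∃ X', m'.work r = some (X', j)

def ExistT (P P' : Family) : Prop :=
  ∀ t A N k, Thread.tx t A N k ∈ P → ∃ A' k', Thread.tx t A' N k' ∈ P'

def DRead (m' : Mem) (P P' : Family) : Prop :=
  ∀ t E N k r, Thread.tx t (plug E (.readOTVar r)) N k ∈ P →
    (∃ k₂, Thread.tx t (plug E (.readOTVar r)) N k₂ ∈ P') ∨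
    (∃ k₂ A, Thread.tx t A N k₂ ∈ P' ∧ ∃ M₂, m'.work r = some (M₂, k₂))

def DWrite (m' : Mem) (P P' : Family) : Prop :=
  ∀ t E N k r M, Thread.tx t (plug E (.writeOTVar r M)) N k ∈ P →
    (∃ k₂, Thread.tx t (plug E (.writeOTVar r M)) N k₂ ∈ P') ∨
    (∃ k₂ A, Thread.tx t A N k₂ ∈ P' ∧ ∃ M₂, m'.work r = some (M₂, k₂))

def NoRead (P P' : Family) : Prop :=
  ∀ t E N k r M j, Thread.tx t (plug E (.readOTVar r)) N k ∈ P →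
    Thread.tx t (plug E (.ret M)) N j ∈ P' → False

def NoWrite (P P' : Family) : Prop :=
  ∀ t E N k r M j, Thread.tx t (plug E (.writeOTVar r M)) N k ∈ P →
    Thread.tx t (plug E (.ret .unit)) N j ∈ P' → False

def WorkPres (k₀ : TrName) (m m' : Mem) : Prop :=
  ∀ r X k, k ≠ k₀ → m.work r = some (X, k) → m'.work r = some (X, k)

def Motive1 (m : Mem) (P : Family) (β : Label) (m' : Mem) (P' : Family) : Prop :=
  (Family.tids P).Nodup →
    (Family.tids P').Nodup ∧
    (∀ k₀, β.txName = some k₀ → WorkPres k₀ m m') ∧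
    Pers m P m' P' ∧
    (β = .tau → ExistT P P' ∧ DRead m' P P' ∧ DWrite m' P P') ∧
    (β ≠ .tau → (Family.tids P').Perm (Family.tids P) ∧ NoRead P P' ∧ NoWrite P P')

def Motive2 (m : Mem) (P : Family) (m' : Mem) (P' : Family) : Prop :=
  (Family.tids P).Nodup →
    (Family.tids P').Nodup ∧ ExistT P P' ∧ Pers m P m' P' ∧
    DRead m' P P' ∧ DWrite m' P P'

end OTMProof
namespace OTMProof

lemma no_read_ret_same {P : Family} (hnd : (Family.tids P).Nodup) {t : TId} {E : Ctx}
    {N : Term} {k : TrName} {r : Loc} {M : Term} {j : TrName}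
    (h1 : Thread.tx t (plug E (.readOTVar r)) N k ∈ P)
    (h2 : Thread.tx t (plug E (.ret M)) N j ∈ P) : False := by
  have := tid_unique hnd h1 h2 rfl
  injection this with _ h _ _
  exact Term.noConfusion (plug_left_inj h)

lemma no_write_ret_same {P : Family} (hnd : (Family.tids P).Nodup) {t : TId} {E : Ctx}
    {N : Term} {k : TrName} {r : Loc} {M : Term} {j : TrName}
    (h1 : Thread.tx t (plug E (.writeOTVar r M)) N k ∈ P)
    (h2 : Thread.tx t (plug E (.ret .unit)) N j ∈ P) : False := by
  have := tid_unique hnd h1 h2 rfl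
  injection this with _ h _ _
  exact Term.noConfusion (plug_left_inj h)

lemma genPlain (m : Mem) (t₁ : TId) (C C' : Term) (tail : Family) (β : Label)
    (hβn : β.txName = none) :
    Motive1 (m) (.plain t₁ C :: tail) β (m)
      (.plain t₁ C' :: tail) := by
  intro hnd
  have hndt : (Family.tids tail).Nodup := List.Nodup.of_cons hnd
  have memtail : ∀ {t A N k}, Thread.tx t A N k ∈ Thread.plain t₁ C :: tail →
      Thread.tx t A N k ∈ tail := by
    intro t A N k h
    rcases List.mem_cons.mp h with h | h
    · cases h
    · exact h
  have memtail' : ∀ {t A N k}, Thread.tx t A N k ∈ Thread.plain t₁ C' :: tail →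
      Thread.tx t A N k ∈ tail := by
    intro t A N k h
    rcases List.mem_cons.mp h with h | h
    · cases h
    · exact h
  refine ⟨hnd, ?_, ?_, ?_, ?_⟩
  · intro k₀ hk; rw [hβn] at hk; cases hk
  · intro r X k t A N hw hmem B N' j hmem'
    have := tid_unique hndt (memtail hmem) (memtail' hmem') rfl
    injection this with _ _ _ h4
    exact ⟨X, by rw [← h4]; exact hw⟩
  · intro _
    refine ⟨?_, ?_, ?_⟩
    · intro t A N k h
      exact ⟨A, k, List.mem_cons_of_mem _ (memtail h)⟩
    · intro t E N k r h
      exact Or.inl ⟨k, List.mem_cons_of_mem _ (memtail h)⟩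
    · intro t E N k r M h
      exact Or.inl ⟨k, List.mem_cons_of_mem _ (memtail h)⟩
  · intro _
    refine ⟨List.Perm.refl _, ?_, ?_⟩
    · intro t E N k r M j h1 h2
      exact no_read_ret_same hndt (memtail h1) (memtail' h2)
    · intro t E N k r M j h1 h2
      exact no_write_ret_same hndt (memtail h1) (memtail' h2)

lemma genTx (m m₂ : Mem) (t₁ : TId) (C C' N₁ : Term) (k₁ : TrName) (tail : Family)
    (hwork : ∀ r X k, m.work r = some (X, k) → m₂.work r = some (X, k))
    (hxr : ∀ E r, C ≠ plug E (.readOTVar r))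
    (hxw : ∀ E r W, C ≠ plug E (.writeOTVar r W)) :
    Motive1 (m) (.tx t₁ C N₁ k₁ :: tail) .tau (m₂)
      (.tx t₁ C' N₁ k₁ :: tail) := by
  intro hnd
  rw [tids_cons] at hnd
  have hndt : (Family.tids tail).Nodup := hnd.of_cons
  have ht₁ : t₁ ∉ Family.tids tail := (List.nodup_cons.mp hnd).1
  have hnd' : (Family.tids (Thread.tx t₁ C' N₁ k₁ :: tail)).Nodup := hnd
  refine ⟨hnd', ?_, ?_, ?_, ?_⟩
  · intro k₀ hk; cases hk
  · -- Pers
    intro r X k t A N hw hmem B N' j hmem'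
    rcases List.mem_cons.mp hmem with h | h
    · -- head
      injection h with h1 h2 h3 h4
      have hB : Thread.tx t B N' j = Thread.tx t₁ C' N₁ k₁ :=
        tid_unique hnd' hmem' (List.mem_cons_self) h1
      injection hB with _ _ _ h4'
      refine ⟨X, ?_⟩
      rw [h4', ← h4]
      exact hwork r X k hw
    · -- tail
      have hmem₂' : Thread.tx t B N' j ∈ tail := by
        rcases List.mem_cons.mp hmem' with h' | h'
        · injection h' with h1 _ _ _
          subst h1
          exact absurd (mem_tids h) ht₁
        · exact h'
      have := tid_unique hndt h hmem₂' rfl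
      injection this with _ _ _ h4
      subst h4
      exact ⟨X, hwork r X _ hw⟩
  · intro _
    refine ⟨?_, ?_, ?_⟩
    · intro t A N k h
      rcases List.mem_cons.mp h with h | h
      · injection h with h1 h2 h3 h4
        rw [h1, h3]
        exact ⟨C', k₁, List.mem_cons_self⟩
      · exact ⟨A, k, List.mem_cons_of_mem _ h⟩
    · intro t E N k r h
      rcases List.mem_cons.mp h with h | h
      · injection h with h1 h2 h3 h4
        exact absurd h2.symm (hxr E r)
      · exact Or.inl ⟨k, List.mem_cons_of_mem _ h⟩
    · intro t E N k r M h
      rcases List.mem_cons.mp h with h | h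
      · injection h with h1 h2 h3 h4
        exact absurd h2.symm (hxw E r M)
      · exact Or.inl ⟨k, List.mem_cons_of_mem _ h⟩
  · intro hne
    exact absurd rfl hne

end OTMProof
namespace OTMProof

lemma case_forkIO (m : Mem) (P : Family) (E : Ctx) (t t' : TId) (M : Term)
    (hfr : t' ∉ Family.tids (.plain t (plug E (.fork M)) :: P)) :
    Motive1 (m) (.plain t (plug E (.fork M)) :: P) .tau ({m with psi := m.psi.addRoot t'})
      (.plain t (plug E (.ret (.tidT t'))) :: .plain t' M :: P) := by
  intro hnd
  rw [tids_cons] at hnd hfr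
  have hndt : (Family.tids P).Nodup := hnd.of_cons
  have memtail : ∀ {t₀ A N k}, Thread.tx t₀ A N k ∈ Thread.plain t (plug E (.fork M)) :: P →
      Thread.tx t₀ A N k ∈ P := by
    intro t₀ A N k h
    rcases List.mem_cons.mp h with h | h
    · cases h
    · exact h
  have memtail' : ∀ {t₀ A N k}, Thread.tx t₀ A N k ∈
      Thread.plain t (plug E (.ret (.tidT t'))) :: Thread.plain t' M :: P →
      Thread.tx t₀ A N k ∈ P := by
    intro t₀ A N k h
    rcases List.mem_cons.mp h with h | h
    · cases h
    · rcases List.mem_cons.mp h with h | h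
      · cases h
      · exact h
  have hnod : (Family.tids (Thread.plain t (plug E (.ret (.tidT t'))) ::
      Thread.plain t' M :: P)).Nodup := by
    rw [tids_cons, tids_cons]
    simp only [Thread.tid] at hnd hfr ⊢
    simp only [List.nodup_cons, List.mem_cons] at hnd hfr ⊢
    push_neg at hfr
    tauto
  refine ⟨hnod, fun k₀ hk => (noTauTx hk).elim, ?_, ?_, fun hne => absurd rfl hne⟩
  · intro r X k t₀ A N hw hmem B N' j hmem'
    have := tid_unique hndt (memtail hmem) (memtail' hmem') rfl
    injection this with _ _ _ e4
    exact ⟨X, by rw [← e4]; exact hw⟩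
  · intro _
    refine ⟨fun t₀ A N k h => ⟨A, k, List.mem_cons_of_mem _ (List.mem_cons_of_mem _ (memtail h))⟩,
      fun t₀ E₀ N₀ k₀ r₀ h =>
        Or.inl ⟨k₀, List.mem_cons_of_mem _ (List.mem_cons_of_mem _ (memtail h))⟩,
      fun t₀ E₀ N₀ k₀ r₀ M₀ h =>
        Or.inl ⟨k₀, List.mem_cons_of_mem _ (List.mem_cons_of_mem _ (memtail h))⟩⟩

lemma case_forkT (m : Mem) (P : Family) (E : Ctx) (t t' : TId) (k : TrName) (M N : Term)
    (hfr : t' ∉ Family.tids (.tx t (plug E (.fork M)) N k :: P)) :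
    Motive1 (m) (.tx t (plug E (.fork M)) N k :: P) .tau ({m with psi := m.psi.addChild t t'})
      (.tx t (plug E (.ret (.tidT t'))) N k :: .tx t' M (.ret .unit) k :: P) := by
  intro hnd
  rw [tids_cons] at hnd hfr
  have hndt : (Family.tids P).Nodup := hnd.of_cons
  have ht : t ∉ Family.tids P := (List.nodup_cons.mp hnd).1
  simp only [List.mem_cons] at hfr
  push_neg at hfr
  have hnd' : (Family.tids (Thread.tx t (plug E (.ret (.tidT t'))) N k ::
      Thread.tx t' M (.ret .unit) k :: P)).Nodup := by
    rw [tids_cons, tids_cons]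
    simp only [Thread.tid] at *
    simp only [List.nodup_cons, List.mem_cons]
    push_neg
    tauto
  refine ⟨hnd', fun k₀ hk => (noTauTx hk).elim, ?_, ?_, fun hne => absurd rfl hne⟩
  · -- Pers
    intro r X k' t₀ A N₀ hw hmem B N' j hmem'
    rcases List.mem_cons.mp hmem with h | h
    · injection h with e1 e2 e3 e4
      have hB := tid_unique hnd' hmem' (List.mem_cons_self) e1
      injection hB with _ _ _ e4'
      refine ⟨X, ?_⟩
      rw [e4', ← e4]
      exact hw
    · have htid₀ : t₀ ∈ Family.tids P := mem_tids h
      have hmem₂' : Thread.tx t₀ B N' j ∈ P := by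
        rcases List.mem_cons.mp hmem' with h' | h'
        · injection h' with e1 _ _ _
          rw [e1] at htid₀
          exact absurd htid₀ ht
        · rcases List.mem_cons.mp h' with h'' | h''
          · injection h'' with e1 _ _ _
            rw [e1] at htid₀
            exact absurd htid₀ hfr.2
          · exact h''
      have := tid_unique hndt h hmem₂' rfl
      injection this with _ _ _ e4
      exact ⟨X, by rw [← e4]; exact hw⟩
  · intro _
    refine ⟨?_, ?_, ?_⟩
    · intro t₀ A N₀ k₀ h
      rcases List.mem_cons.mp h with h | h
      · injection h with e1 _ e3 _
        rw [e1, e3]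
        exact ⟨_, k, List.mem_cons_self⟩
      · exact ⟨A, k₀, List.mem_cons_of_mem _ (List.mem_cons_of_mem _ h)⟩
    · intro t₀ E₀ N₀ k₀ r₀ h
      rcases List.mem_cons.mp h with h | h
      · injection h with _ e2 _ _
        obtain ⟨_, ec⟩ := plug_eq_plug' e2 rfl rfl
        exact Term.noConfusion ec
      · exact Or.inl ⟨k₀, List.mem_cons_of_mem _ (List.mem_cons_of_mem _ h)⟩
    · intro t₀ E₀ N₀ k₀ r₀ M₀ h
      rcases List.mem_cons.mp h with h | h
      · injection h with _ e2 _ _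
        obtain ⟨_, ec⟩ := plug_eq_plug' e2 rfl rfl
        exact Term.noConfusion ec
      · exact Or.inl ⟨k₀, List.mem_cons_of_mem _ (List.mem_cons_of_mem _ h)⟩

end OTMProof
namespace OTMProof

lemma case_read1 (m : Mem) (P : Family) (E : Ctx) (t : TId) (k : TrName) (M N : Term) (r : Loc)
    (h1 : m.work r = none) :
    Motive1 m (.tx t (plug E (.readOTVar r)) N k :: P) .tau
      ({m with work := updFn m.work r (M, k)}) (.tx t (plug E (.ret M)) N k :: P) := by
  intro hnd
  rw [tids_cons] at hnd
  have hndt : (Family.tids P).Nodup := hnd.of_cons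
  have ht : t ∉ Family.tids P := (List.nodup_cons.mp hnd).1
  have hnd' : (Family.tids (Thread.tx t (plug E (.ret M)) N k :: P)).Nodup := hnd
  refine ⟨hnd', fun k₀ hk => (noTauTx hk).elim, ?_, ?_, fun hne => absurd rfl hne⟩
  · intro r₀ X k' t₀ A N₀ hw hmem B N' j hmem'
    have hr₀ : r₀ ≠ r := fun h => by rw [h, h1] at hw; cases hw
    have hwork : ({m with work := updFn m.work r (M, k)} : Mem).work r₀ = some (X, k') := by
      show updFn m.work r (M, k) r₀ = _
      rw [updFn_ne _ _ hr₀]; exact hw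
    rcases List.mem_cons.mp hmem with h | h
    · injection h with e1 e2 e3 e4
      have hB := tid_unique hnd' hmem' (List.mem_cons_self) e1
      injection hB with _ _ _ e4'
      refine ⟨X, ?_⟩
      rw [e4] at hwork
      rw [e4']
      exact hwork
    · have hmem₂' : Thread.tx t₀ B N' j ∈ P := by
        rcases List.mem_cons.mp hmem' with h' | h'
        · injection h' with e1 _ _ _
          rw [e1] at h
          exact absurd (mem_tids h) ht
        · exact h'
      have := tid_unique hndt h hmem₂' rfl
      injection this with _ _ _ e4
      exact ⟨X, by rw [← e4]; exact hwork⟩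
  · intro _
    refine ⟨?_, ?_, ?_⟩
    · intro t₀ A N₀ k₀ h
      rcases List.mem_cons.mp h with h | h
      · injection h with e1 _ e3 _
        rw [e1, e3]
        exact ⟨_, k, List.mem_cons_self⟩
      · exact ⟨A, k₀, List.mem_cons_of_mem _ h⟩
    · intro t₀ E₀ N₀ k₀ r₀ h
      rcases List.mem_cons.mp h with h | h
      · injection h with e1 e2 e3 e4
        obtain ⟨eE, ec⟩ := plug_eq_plug' e2 rfl rfl
        injection ec with er
        right
        refine ⟨k, plug E (.ret M), ?_, M, ?_⟩
        · rw [e1, e3]; exact List.mem_cons_self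
        · show updFn m.work r (M, k) r₀ = _
          rw [er]
          exact updFn_self _ _ _
      · exact Or.inl ⟨k₀, List.mem_cons_of_mem _ h⟩
    · intro t₀ E₀ N₀ k₀ r₀ M₀ h
      rcases List.mem_cons.mp h with h | h
      · injection h with _ e2 _ _
        obtain ⟨_, ec⟩ := plug_eq_plug' e2 rfl rfl
        exact Term.noConfusion ec
      · exact Or.inl ⟨k₀, List.mem_cons_of_mem _ h⟩

lemma case_write1 (m : Mem) (P : Family) (E : Ctx) (t : TId) (k : TrName) (M N : Term) (r : Loc)
    (h1 : m.work r = none) :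
    Motive1 m (.tx t (plug E (.writeOTVar r M)) N k :: P) .tau
      ({m with work := updFn m.work r (M, k)}) (.tx t (plug E (.ret .unit)) N k :: P) := by
  intro hnd
  rw [tids_cons] at hnd
  have hndt : (Family.tids P).Nodup := hnd.of_cons
  have ht : t ∉ Family.tids P := (List.nodup_cons.mp hnd).1
  have hnd' : (Family.tids (Thread.tx t (plug E (.ret .unit)) N k :: P)).Nodup := hnd
  refine ⟨hnd', fun k₀ hk => (noTauTx hk).elim, ?_, ?_, fun hne => absurd rfl hne⟩
  · intro r₀ X k' t₀ A N₀ hw hmem B N' j hmem'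
    have hr₀ : r₀ ≠ r := fun h => by rw [h, h1] at hw; cases hw
    have hwork : ({m with work := updFn m.work r (M, k)} : Mem).work r₀ = some (X, k') := by
      show updFn m.work r (M, k) r₀ = _
      rw [updFn_ne _ _ hr₀]; exact hw
    rcases List.mem_cons.mp hmem with h | h
    · injection h with e1 e2 e3 e4
      have hB := tid_unique hnd' hmem' (List.mem_cons_self) e1
      injection hB with _ _ _ e4'
      refine ⟨X, ?_⟩
      rw [e4] at hwork
      rw [e4']
      exact hwork
    · have hmem₂' : Thread.tx t₀ B N' j ∈ P := by
        rcases List.mem_cons.mp hmem' with h' | h'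
        · injection h' with e1 _ _ _
          rw [e1] at h
          exact absurd (mem_tids h) ht
        · exact h'
      have := tid_unique hndt h hmem₂' rfl
      injection this with _ _ _ e4
      exact ⟨X, by rw [← e4]; exact hwork⟩
  · intro _
    refine ⟨?_, ?_, ?_⟩
    · intro t₀ A N₀ k₀ h
      rcases List.mem_cons.mp h with h | h
      · injection h with e1 _ e3 _
        rw [e1, e3]
        exact ⟨_, k, List.mem_cons_self⟩
      · exact ⟨A, k₀, List.mem_cons_of_mem _ h⟩
    · intro t₀ E₀ N₀ k₀ r₀ h
      rcases List.mem_cons.mp h with h | h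
      · injection h with _ e2 _ _
        obtain ⟨_, ec⟩ := plug_eq_plug' e2 rfl rfl
        exact Term.noConfusion ec
      · exact Or.inl ⟨k₀, List.mem_cons_of_mem _ h⟩
    · intro t₀ E₀ N₀ k₀ r₀ M₀ h
      rcases List.mem_cons.mp h with h | h
      · injection h with e1 e2 e3 e4
        obtain ⟨eE, ec⟩ := plug_eq_plug' e2 rfl rfl
        injection ec with er em
        right
        refine ⟨k, plug E (.ret .unit), ?_, M, ?_⟩
        · rw [e1, e3]; exact List.mem_cons_self
        · show updFn m.work r (M, k) r₀ = _
          rw [er]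
          exact updFn_self _ _ _
      · exact Or.inl ⟨k₀, List.mem_cons_of_mem _ h⟩

end OTMProof
namespace OTMProof

lemma case_read2 (m : Mem) (P : Family) (E : Ctx) (t : TId) (k j₀ : TrName) (M N : Term)
    (r : Loc) (hw : m.work r = some (M, j₀)) :
    Motive1 m (.tx t (plug E (.readOTVar r)) N k :: P) .tau
      ({m with work := renameWork m.work k j₀})
      (Family.renameTx (.tx t (plug E (.ret M)) N k :: P) k j₀) := by
  intro hnd
  have hP' : Family.renameTx (.tx t (plug E (.ret M)) N k :: P) k j₀
      = .tx t (plug E (.ret M)) N j₀ :: Family.renameTx P k j₀ := by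
    rw [renameTx_cons, renameTx_tx]
    simp
  rw [hP']
  rw [tids_cons] at hnd
  have hndt : (Family.tids P).Nodup := hnd.of_cons
  have ht : t ∉ Family.tids P := (List.nodup_cons.mp hnd).1
  have hnd' : (Family.tids (Thread.tx t (plug E (.ret M)) N j₀ ::
      Family.renameTx P k j₀)).Nodup := by
    rw [tids_cons, tids_renameTx]
    exact hnd
  refine ⟨hnd', fun k₀ hk => (noTauTx hk).elim, ?_, ?_, fun hne => absurd rfl hne⟩
  · -- Pers
    intro r₀ X k' t₀ A N₀ hw₀ hmem B N' j hmem'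
    have hwork : ({m with work := renameWork m.work k j₀} : Mem).work r₀
        = some (X, if k' = k then j₀ else k') := renameWork_eq hw₀ k j₀
    rcases List.mem_cons.mp hmem with h | h
    · injection h with e1 e2 e3 e4
      have hB := tid_unique hnd' hmem' (List.mem_cons_self) e1
      injection hB with _ _ _ e4'
      refine ⟨X, ?_⟩
      rw [e4']
      rw [if_pos e4] at hwork
      exact hwork
    · have hmem₁ : (Thread.tx t₀ A N₀ k').renameTx k j₀ ∈ Family.renameTx P k j₀ :=
        mem_renameTx h k j₀
      rw [renameTx_tx] at hmem₁
      have hmem₂' : Thread.tx t₀ B N' j ∈ Family.renameTx P k j₀ := by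
        rcases List.mem_cons.mp hmem' with h' | h'
        · injection h' with e1 _ _ _
          rw [e1] at h
          exact absurd (mem_tids h) ht
        · exact h'
      have hndr : (Family.tids (Family.renameTx P k j₀)).Nodup := by
        rw [tids_renameTx]; exact hndt
      have := tid_unique hndr hmem₁ hmem₂' rfl
      injection this with _ _ _ e4
      refine ⟨X, ?_⟩
      rw [← e4]
      exact hwork
  · intro _
    refine ⟨?_, ?_, ?_⟩
    · -- ExistT
      intro t₀ A N₀ k₀ h
      rcases List.mem_cons.mp h with h | h
      · injection h with e1 _ e3 _
        rw [e1, e3]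
        exact ⟨_, j₀, List.mem_cons_self⟩
      · have := mem_renameTx h k j₀
        rw [renameTx_tx] at this
        exact ⟨A, _, List.mem_cons_of_mem _ this⟩
    · -- DRead
      intro t₀ E₀ N₀ k₀ r₀ h
      rcases List.mem_cons.mp h with h | h
      · injection h with e1 e2 e3 e4
        obtain ⟨eE, ec⟩ := plug_eq_plug' e2 rfl rfl
        injection ec with er
        right
        refine ⟨j₀, plug E (.ret M), ?_, M, ?_⟩
        · rw [e1, e3]; exact List.mem_cons_self
        · show renameWork m.work k j₀ r₀ = _
          rw [er, renameWork_eq hw k j₀]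
          split <;> rfl
      · have := mem_renameTx h k j₀
        rw [renameTx_tx] at this
        exact Or.inl ⟨_, List.mem_cons_of_mem _ this⟩
    · -- DWrite
      intro t₀ E₀ N₀ k₀ r₀ M₀ h
      rcases List.mem_cons.mp h with h | h
      · injection h with _ e2 _ _
        obtain ⟨_, ec⟩ := plug_eq_plug' e2 rfl rfl
        exact Term.noConfusion ec
      · have := mem_renameTx h k j₀
        rw [renameTx_tx] at this
        exact Or.inl ⟨_, List.mem_cons_of_mem _ this⟩

lemma case_write2 (m : Mem) (P : Family) (E : Ctx) (t : TId) (k j₀ : TrName) (M M₀ N : Term)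
    (r : Loc) (hw : m.work r = some (M₀, j₀)) :
    Motive1 m (.tx t (plug E (.writeOTVar r M)) N k :: P) .tau
      ({m with work := updFn (renameWork m.work k j₀) r (M, j₀)})
      (Family.renameTx (.tx t (plug E (.ret .unit)) N k :: P) k j₀) := by
  intro hnd
  have hP' : Family.renameTx (.tx t (plug E (.ret .unit)) N k :: P) k j₀
      = .tx t (plug E (.ret .unit)) N j₀ :: Family.renameTx P k j₀ := by
    rw [renameTx_cons, renameTx_tx]
    simp
  rw [hP']
  rw [tids_cons] at hnd
  have hndt : (Family.tids P).Nodup := hnd.of_cons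
  have ht : t ∉ Family.tids P := (List.nodup_cons.mp hnd).1
  have hnd' : (Family.tids (Thread.tx t (plug E (.ret .unit)) N j₀ ::
      Family.renameTx P k j₀)).Nodup := by
    rw [tids_cons, tids_renameTx]
    exact hnd
  refine ⟨hnd', fun k₀ hk => (noTauTx hk).elim, ?_, ?_, fun hne => absurd rfl hne⟩
  · -- Pers
    intro r₀ X k' t₀ A N₀ hw₀ hmem B N' j hmem'
    have hwork : ({m with work := updFn (renameWork m.work k j₀) r (M, j₀)} : Mem).work r₀
        = some (if r₀ = r then M else X, if r₀ = r then j₀ else if k' = k then j₀ else k') := by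
      show updFn (renameWork m.work k j₀) r (M, j₀) r₀ = _
      by_cases hr : r₀ = r
      · rw [hr, updFn_self]
        simp [hr]
      · rw [updFn_ne _ _ hr, renameWork_eq hw₀ k j₀]
        simp [hr]
    -- if r₀ = r then k' = j₀
    have hkj : r₀ = r → k' = j₀ := by
      intro hr
      rw [hr, hw] at hw₀
      injection hw₀ with h
      exact (Prod.mk.injEq _ _ _ _ ▸ h).2.symm ▸ rfl
    rcases List.mem_cons.mp hmem with h | h
    · injection h with e1 e2 e3 e4
      have hB := tid_unique hnd' hmem' (List.mem_cons_self) e1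
      injection hB with _ _ _ e4'
      refine ⟨if r₀ = r then M else X, ?_⟩
      rw [e4']
      rw [if_pos e4] at hwork
      rw [hwork]
      by_cases hr : r₀ = r <;> simp [hr]
    · have hmem₁ : (Thread.tx t₀ A N₀ k').renameTx k j₀ ∈ Family.renameTx P k j₀ :=
        mem_renameTx h k j₀
      rw [renameTx_tx] at hmem₁
      have hmem₂' : Thread.tx t₀ B N' j ∈ Family.renameTx P k j₀ := by
        rcases List.mem_cons.mp hmem' with h' | h'
        · injection h' with e1 _ _ _
          rw [e1] at h
          exact absurd (mem_tids h) ht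
        · exact h'
      have hndr : (Family.tids (Family.renameTx P k j₀)).Nodup := by
        rw [tids_renameTx]; exact hndt
      have := tid_unique hndr hmem₁ hmem₂' rfl
      injection this with _ _ _ e4
      refine ⟨if r₀ = r then M else X, ?_⟩
      rw [← e4, hwork]
      by_cases hr : r₀ = r
      · have := hkj hr
        simp [hr, this]
      · simp [hr]
  · intro _
    refine ⟨?_, ?_, ?_⟩
    · -- ExistT
      intro t₀ A N₀ k₀ h
      rcases List.mem_cons.mp h with h | h
      · injection h with e1 _ e3 _
        rw [e1, e3]
        exact ⟨_, j₀, List.mem_cons_self⟩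
      · have := mem_renameTx h k j₀
        rw [renameTx_tx] at this
        exact ⟨A, _, List.mem_cons_of_mem _ this⟩
    · -- DRead
      intro t₀ E₀ N₀ k₀ r₀ h
      rcases List.mem_cons.mp h with h | h
      · injection h with _ e2 _ _
        obtain ⟨_, ec⟩ := plug_eq_plug' e2 rfl rfl
        exact Term.noConfusion ec
      · have := mem_renameTx h k j₀
        rw [renameTx_tx] at this
        exact Or.inl ⟨_, List.mem_cons_of_mem _ this⟩
    · -- DWrite
      intro t₀ E₀ N₀ k₀ r₀ M₁ h
      rcases List.mem_cons.mp h with h | h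
      · injection h with e1 e2 e3 e4
        obtain ⟨eE, ec⟩ := plug_eq_plug' e2 rfl rfl
        injection ec with er em
        right
        refine ⟨j₀, plug E (.ret .unit), ?_, M, ?_⟩
        · rw [e1, e3]; exact List.mem_cons_self
        · show updFn (renameWork m.work k j₀) r (M, j₀) r₀ = _
          rw [er]
          exact updFn_self _ _ _
      · have := mem_renameTx h k j₀
        rw [renameTx_tx] at this
        exact Or.inl ⟨_, List.mem_cons_of_mem _ this⟩

end OTMProof
namespace OTMProof

lemma case_inner (m m' : Mem) (P Q₁ Q₂ : Family) (E : Ctx) (t : TId) (k j : TrName)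
    (C M₁ R N : Term)
    (hsl : spineLen C = 0)
    (hcr : ∀ r₀, Term.readOTVar r₀ ≠ C)
    (hcw : ∀ r₀ W, Term.writeOTVar r₀ W ≠ C)
    (ih : Motive2 m (.tx t M₁ (.ret .unit) k :: P) m' (Q₁ ++ .tx t R (.ret .unit) j :: Q₂)) :
    Motive1 m (.tx t (plug E C) N k :: P) .tau m' (Q₁ ++ .tx t (plug E R) N j :: Q₂) := by
  intro hnd
  rw [tids_cons] at hnd
  have hndt : (Family.tids P).Nodup := hnd.of_cons
  have ht : t ∉ Family.tids P := (List.nodup_cons.mp hnd).1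
  have hndS : (Family.tids (Thread.tx t M₁ (.ret .unit) k :: P)).Nodup := by
    rw [tids_cons]; exact hnd
  obtain ⟨ndF, exS, persS, drS, dwS⟩ := ih hndS
  have htids : Family.tids (Q₁ ++ Thread.tx t (plug E R) N j :: Q₂)
      = Family.tids (Q₁ ++ Thread.tx t R (.ret .unit) j :: Q₂) := by
    rw [tids_append, tids_append, tids_cons, tids_cons]
    rfl
  have hnd' : (Family.tids (Q₁ ++ Thread.tx t (plug E R) N j :: Q₂)).Nodup := by
    rw [htids]; exact ndF
  have hmemmid : Thread.tx t (plug E R) N j ∈ Q₁ ++ Thread.tx t (plug E R) N j :: Q₂ :=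
    List.mem_append_right _ (List.mem_cons_self)
  have hmemmidS : Thread.tx t R (.ret .unit) j ∈ Q₁ ++ Thread.tx t R (.ret .unit) j :: Q₂ :=
    List.mem_append_right _ (List.mem_cons_self)
  have hside : ∀ (t₀ : TId) (A N₀ : Term) (k₀ : TrName), t₀ ≠ t →
      (Thread.tx t₀ A N₀ k₀ ∈ Q₁ ++ Thread.tx t R (.ret .unit) j :: Q₂ ↔
        Thread.tx t₀ A N₀ k₀ ∈ Q₁ ++ Thread.tx t (plug E R) N j :: Q₂) := by
    intro t₀ A N₀ k₀ hT
    simp only [List.mem_append, List.mem_cons]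
    constructor
    · rintro (h | h | h)
      · exact Or.inl h
      · injection h with e1 _ _ _; exact absurd e1 hT
      · exact Or.inr (Or.inr h)
    · rintro (h | h | h)
      · exact Or.inl h
      · injection h with e1 _ _ _; exact absurd e1 hT
      · exact Or.inr (Or.inr h)
  refine ⟨hnd', fun k₀ hk => (noTauTx hk).elim, ?_, ?_, fun hne => absurd rfl hne⟩
  · -- Pers
    intro r₀ X k' t₀ A N₀ hw₀ hmem B N' j' hmem'
    rcases List.mem_cons.mp hmem with h | h
    · injection h with e1 e2 e3 e4
      have hB := tid_unique hnd' hmem' hmemmid e1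
      injection hB with _ _ _ e4'
      have hmemhd : Thread.tx t M₁ (.ret .unit) k' ∈
          Thread.tx t M₁ (.ret .unit) k :: P := by
        rw [e4]; exact List.mem_cons_self
      obtain ⟨X', hX'⟩ := persS r₀ X k' t M₁ (.ret .unit) hw₀ hmemhd R (.ret .unit) j hmemmidS
      exact ⟨X', by rw [e4']; exact hX'⟩
    · have ht₀ : t₀ ≠ t := fun he => ht (he ▸ mem_tids h)
      have hmem'S : Thread.tx t₀ B N' j' ∈ Q₁ ++ Thread.tx t R (.ret .unit) j :: Q₂ :=
        (hside _ _ _ _ ht₀).mpr hmem'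
      exact persS r₀ X k' t₀ A N₀ hw₀ (List.mem_cons_of_mem _ h) B N' j' hmem'S
  · intro _
    refine ⟨?_, ?_, ?_⟩
    · -- ExistT
      intro t₀ A N₀ k₀ h
      rcases List.mem_cons.mp h with h | h
      · injection h with e1 _ e3 _
        rw [e1, e3]
        exact ⟨_, j, hmemmid⟩
      · have ht₀ : t₀ ≠ t := fun he => ht (he ▸ mem_tids h)
        obtain ⟨A', k'', hm⟩ := exS t₀ A N₀ k₀ (List.mem_cons_of_mem _ h)
        exact ⟨A', k'', (hside _ _ _ _ ht₀).mp hm⟩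
    · -- DRead
      intro t₀ E₀ N₀ k₀ r₀ h
      rcases List.mem_cons.mp h with h | h
      · injection h with _ e2 _ _
        obtain ⟨_, ec⟩ := plug_eq_plug' e2 rfl hsl
        exact absurd ec (hcr r₀)
      · have ht₀ : t₀ ≠ t := fun he => ht (he ▸ mem_tids h)
        rcases drS t₀ E₀ N₀ k₀ r₀ (List.mem_cons_of_mem _ h) with ⟨k₂, hm⟩ | ⟨k₂, A, hm, hcl⟩
        · exact Or.inl ⟨k₂, (hside _ _ _ _ ht₀).mp hm⟩
        · exact Or.inr ⟨k₂, A, (hside _ _ _ _ ht₀).mp hm, hcl⟩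
    · -- DWrite
      intro t₀ E₀ N₀ k₀ r₀ M₀ h
      rcases List.mem_cons.mp h with h | h
      · injection h with _ e2 _ _
        obtain ⟨_, ec⟩ := plug_eq_plug' e2 rfl hsl
        exact absurd ec (hcw r₀ M₀)
      · have ht₀ : t₀ ≠ t := fun he => ht (he ▸ mem_tids h)
        rcases dwS t₀ E₀ N₀ k₀ r₀ M₀ (List.mem_cons_of_mem _ h) with ⟨k₂, hm⟩ | ⟨k₂, A, hm, hcl⟩
        · exact Or.inl ⟨k₂, (hside _ _ _ _ ht₀).mp hm⟩
        · exact Or.inr ⟨k₂, A, (hside _ _ _ _ ht₀).mp hm, hcl⟩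

end OTMProof
namespace OTMProof

lemma case_newTx (m : Mem) (t : TId) (M N : Term) (k : TrName) :
    Motive1 m [.plain t (.bind (.atomic M) N)] (.newT k)
      ({m with used := insert k m.used}) [.tx t M N k] := by
  intro hnd
  have hnomem : ∀ {t₀ A N₀ k₀}, Thread.tx t₀ A N₀ k₀ ∈
      [Thread.plain t (.bind (.atomic M) N)] → False := by
    intro t₀ A N₀ k₀ h
    rcases List.mem_singleton.mp h with h
    cases h
  refine ⟨hnd, fun k₀ _ r X kk _ hw => hw, ?_, ?_, ?_⟩
  · intro r X k' t₀ A N₀ _ hmem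
    exact (hnomem hmem).elim
  · intro h; cases h
  · intro _
    exact ⟨List.Perm.refl _, fun _ _ _ _ _ _ _ h _ => hnomem h,
      fun _ _ _ _ _ _ _ h _ => hnomem h⟩

lemma genToPlain (m m' : Mem) (T : Thread) (t₀ : TId) (C : Term) (β : Label)
    (hβ : β ≠ .tau)
    (hwp : ∀ k₀, β.txName = some k₀ → WorkPres k₀ m m')
    (htid : T.tid = t₀) :
    Motive1 m [T] β m' [.plain t₀ C] := by
  intro hnd
  have hnomem : ∀ {t₁ B N' j}, Thread.tx t₁ B N' j ∈ [Thread.plain t₀ C] → False := by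
    intro t₁ B N' j h
    rcases List.mem_singleton.mp h with h
    cases h
  refine ⟨by simp [Family.tids], hwp, ?_, fun h => absurd h hβ, ?_⟩
  · intro r X k' t₁ A N₀ _ _ B N' j hmem'
    exact (hnomem hmem').elim
  · intro _
    refine ⟨?_, fun _ _ _ _ _ _ _ _ h => hnomem h, fun _ _ _ _ _ _ _ _ h => hnomem h⟩
    rw [show Family.tids [T] = [T.tid] from rfl, htid]
    exact List.Perm.refl _

lemma case_permC (m m' : Mem) (P Q P' Q' : Family) (β : Label)
    (hPQ : P.Perm Q) (hP'Q' : P'.Perm Q')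
    (ih : Motive1 m P β m' P') : Motive1 m Q β m' Q' := by
  intro hnd
  have htP : (Family.tids P).Perm (Family.tids Q) := hPQ.map Thread.tid
  have htP' : (Family.tids P').Perm (Family.tids Q') := hP'Q'.map Thread.tid
  obtain ⟨nd1, wp1, pers1, tau1, nt1⟩ := ih (htP.nodup_iff.mpr hnd)
  refine ⟨htP'.nodup_iff.mp nd1, wp1, ?_, ?_, ?_⟩
  · intro r X k t A N hw hmem B N' j hmem'
    exact pers1 r X k t A N hw (hPQ.mem_iff.mpr hmem) B N' j (hP'Q'.mem_iff.mpr hmem')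
  · intro hτ
    obtain ⟨ex1, dr1, dw1⟩ := tau1 hτ
    refine ⟨?_, ?_, ?_⟩
    · intro t A N k h
      obtain ⟨A', k', hm⟩ := ex1 t A N k (hPQ.mem_iff.mpr h)
      exact ⟨A', k', hP'Q'.mem_iff.mp hm⟩
    · intro t E N k r h
      rcases dr1 t E N k r (hPQ.mem_iff.mpr h) with ⟨k₂, hm⟩ | ⟨k₂, A, hm, hcl⟩
      · exact Or.inl ⟨k₂, hP'Q'.mem_iff.mp hm⟩
      · exact Or.inr ⟨k₂, A, hP'Q'.mem_iff.mp hm, hcl⟩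
    · intro t E N k r M h
      rcases dw1 t E N k r M (hPQ.mem_iff.mpr h) with ⟨k₂, hm⟩ | ⟨k₂, A, hm, hcl⟩
      · exact Or.inl ⟨k₂, hP'Q'.mem_iff.mp hm⟩
      · exact Or.inr ⟨k₂, A, hP'Q'.mem_iff.mp hm, hcl⟩
  · intro hτ
    obtain ⟨perm1, nr1, nw1⟩ := nt1 hτ
    refine ⟨(htP'.symm.trans perm1).trans htP, ?_, ?_⟩
    · intro t E N k r M j h1 h2
      exact nr1 t E N k r M j (hPQ.mem_iff.mpr h1) (hP'Q'.mem_iff.mpr h2)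
    · intro t E N k r M j h1 h2
      exact nw1 t E N k r M j (hPQ.mem_iff.mpr h1) (hP'Q'.mem_iff.mpr h2)

lemma star_refl (m : Mem) (P : Family) : Motive2 m P m P := by
  intro hnd
  refine ⟨hnd, fun t A N k h => ⟨A, k, h⟩, ?_, fun t E N k r h => Or.inl ⟨k, h⟩,
    fun t E N k r M h => Or.inl ⟨k, h⟩⟩
  intro r X k t A N hw hmem B N' j hmem'
  have := tid_unique hnd hmem hmem' rfl
  injection this with _ _ _ e4
  exact ⟨X, by rw [← e4]; exact hw⟩

lemma star_cons (m m₂ m₃ : Mem) (P P₂ P₃ : Family)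
    (ih1 : Motive1 m P .tau m₂ P₂) (ih2 : Motive2 m₂ P₂ m₃ P₃) :
    Motive2 m P m₃ P₃ := by
  intro hnd
  obtain ⟨nd2, _, pers1, tau1, _⟩ := ih1 hnd
  obtain ⟨ex1, dr1, dw1⟩ := tau1 rfl
  obtain ⟨nd3, ex2, pers2, dr2, dw2⟩ := ih2 nd2
  refine ⟨nd3, ?_, ?_, ?_, ?_⟩
  · intro t A N k h
    obtain ⟨A', k', hm⟩ := ex1 t A N k h
    exact ex2 t A' N k' hm
  · -- Pers
    intro r X k t A N hw hmem B N' j hmem'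
    obtain ⟨A₂, k₂, hm₂⟩ := ex1 t A N k hmem
    obtain ⟨X₂, hw₂⟩ := pers1 r X k t A N hw hmem A₂ N k₂ hm₂
    exact pers2 r X₂ k₂ t A₂ N hw₂ hm₂ B N' j hmem'
  · -- DRead
    intro t E N k r h
    rcases dr1 t E N k r h with ⟨k₂, hm⟩ | ⟨k₂, A, hm, M₂, hcl⟩
    · exact dr2 t E N k₂ r hm
    · obtain ⟨A₃, k₃, hm₃⟩ := ex2 t A N k₂ hm
      obtain ⟨X₃, hw₃⟩ := pers2 r M₂ k₂ t A N hcl hm A₃ N k₃ hm₃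
      exact Or.inr ⟨k₃, A₃, hm₃, X₃, hw₃⟩
  · -- DWrite
    intro t E N k r M h
    rcases dw1 t E N k r M h with ⟨k₂, hm⟩ | ⟨k₂, A, hm, M₂, hcl⟩
    · exact dw2 t E N k₂ r M hm
    · obtain ⟨A₃, k₃, hm₃⟩ := ex2 t A N k₂ hm
      obtain ⟨X₃, hw₃⟩ := pers2 r M₂ k₂ t A N hcl hm A₃ N k₃ hm₃
      exact Or.inr ⟨k₃, A₃, hm₃, X₃, hw₃⟩

end OTMProof
namespace OTMProof

lemma case_mcast (m m' : Mem) (P P' Q Q' : Family) (β β₂ : Label)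
    (hβ : β ≠ .tau) (hβ₂ : β₂ ≠ .tau)
    (ih1 : Motive1 m P β m' P') (ih2 : Motive1 m Q β₂ m' Q') :
    Motive1 m (P ++ Q) β m' (P' ++ Q') := by
  intro hnd
  rw [tids_append] at hnd
  have ndP := hnd.of_append_left
  have ndQ := hnd.of_append_right
  have disj : (Family.tids P).Disjoint (Family.tids Q) := List.disjoint_of_nodup_append hnd
  obtain ⟨nd1, wp1, pers1, _, nt1⟩ := ih1 ndP
  obtain ⟨perm1, nr1, nw1⟩ := nt1 hβ
  obtain ⟨nd2, _, pers2, _, nt2⟩ := ih2 ndQ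
  obtain ⟨perm2, nr2, nw2⟩ := nt2 hβ₂
  refine ⟨?_, wp1, ?_, fun h => absurd h hβ, ?_⟩
  · rw [tids_append]
    exact nd1.append nd2 (fun a ha1 ha2 => disj (perm1.subset ha1) (perm2.subset ha2))
  · intro r X k t A N hw hmem B N' j hmem'
    rcases List.mem_append.mp hmem with h | h <;>
      rcases List.mem_append.mp hmem' with h' | h'
    · exact pers1 r X k t A N hw h B N' j h'
    · exact absurd (perm2.subset (mem_tids h')) (fun hq => disj (mem_tids h) hq)
    · exact absurd (perm1.subset (mem_tids h')) (fun hp => disj hp (mem_tids h))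
    · exact pers2 r X k t A N hw h B N' j h'
  · intro _
    refine ⟨?_, ?_, ?_⟩
    · rw [tids_append, tids_append]
      exact perm1.append perm2
    · intro t E N k r M j h1 h2
      rcases List.mem_append.mp h1 with h | h <;>
        rcases List.mem_append.mp h2 with h' | h'
      · exact nr1 t E N k r M j h h'
      · exact absurd (perm2.subset (mem_tids h')) (fun hq => disj (mem_tids h) hq)
      · exact absurd (perm1.subset (mem_tids h')) (fun hp => disj hp (mem_tids h))
      · exact nr2 t E N k r M j h h'
    · intro t E N k r M j h1 h2
      rcases List.mem_append.mp h1 with h | h <;>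
        rcases List.mem_append.mp h2 with h' | h'
      · exact nw1 t E N k r M j h h'
      · exact absurd (perm2.subset (mem_tids h')) (fun hq => disj (mem_tids h) hq)
      · exact absurd (perm1.subset (mem_tids h')) (fun hp => disj hp (mem_tids h))
      · exact nw2 t E N k r M j h h'

lemma case_group (m m' : Mem) (P P' Q : Family) (β : Label) (k : TrName)
    (hβtx : β.txName = some k) (hkQ : k ∉ Family.txNames Q)
    (ih : Motive1 m P β m' P') : Motive1 m (P ++ Q) β m' (P' ++ Q) := by
  have hβ : β ≠ .tau := fun h => noTauTx (h ▸ hβtx)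
  intro hnd
  rw [tids_append] at hnd
  have ndP := hnd.of_append_left
  have ndQ := hnd.of_append_right
  have disj : (Family.tids P).Disjoint (Family.tids Q) := List.disjoint_of_nodup_append hnd
  obtain ⟨nd1, wp1, pers1, _, nt1⟩ := ih ndP
  obtain ⟨perm1, nr1, nw1⟩ := nt1 hβ
  refine ⟨?_, wp1, ?_, fun h => absurd h hβ, ?_⟩
  · rw [tids_append]
    exact nd1.append ndQ (fun a ha1 ha2 => disj (perm1.subset ha1) ha2)
  · intro r X k' t A N hw hmem B N' j hmem'
    rcases List.mem_append.mp hmem with h | h <;>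
      rcases List.mem_append.mp hmem' with h' | h'
    · exact pers1 r X k' t A N hw h B N' j h'
    · exact absurd (mem_tids h') (fun hq => disj (mem_tids h) hq)
    · exact absurd (perm1.subset (mem_tids h')) (fun hp => disj hp (mem_tids h))
    · have := tid_unique ndQ h h' rfl
      injection this with _ _ _ e4
      have hk' : k' ≠ k := fun he => hkQ (he ▸ mem_txNames h)
      exact ⟨X, by rw [← e4]; exact wp1 k hβtx r X k' hk' hw⟩
  · intro _
    refine ⟨?_, ?_, ?_⟩
    · rw [tids_append, tids_append]
      exact perm1.append_right _
    · intro t E N k' r M j h1 h2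
      rcases List.mem_append.mp h1 with h | h <;>
        rcases List.mem_append.mp h2 with h' | h'
      · exact nr1 t E N k' r M j h h'
      · exact absurd (mem_tids h') (fun hq => disj (mem_tids h) hq)
      · exact absurd (perm1.subset (mem_tids h')) (fun hp => disj hp (mem_tids h))
      · exact no_read_ret_same ndQ h h'
    · intro t E N k' r M j h1 h2
      rcases List.mem_append.mp h1 with h | h <;>
        rcases List.mem_append.mp h2 with h' | h'
      · exact nw1 t E N k' r M j h h'
      · exact absurd (mem_tids h') (fun hq => disj (mem_tids h) hq)
      · exact absurd (perm1.subset (mem_tids h')) (fun hp => disj hp (mem_tids h))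
      · exact no_write_ret_same ndQ h h'

end OTMProof
namespace OTMProof

lemma plug_ne_read {E E₀ : Ctx} {r₀ : Loc} {X : Term} (hsl : spineLen X = 0)
    (hne : ∀ r₀', Term.readOTVar r₀' ≠ X) : plug E X ≠ plug E₀ (.readOTVar r₀) := by
  intro he
  obtain ⟨_, ec⟩ := plug_eq_plug' he.symm rfl hsl
  exact hne r₀ ec

lemma plug_ne_write {E E₀ : Ctx} {r₀ : Loc} {W X : Term} (hsl : spineLen X = 0)
    (hne : ∀ r₀' W', Term.writeOTVar r₀' W' ≠ X) : plug E X ≠ plug E₀ (.writeOTVar r₀ W) := by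
  intro he
  obtain ⟨_, ec⟩ := plug_eq_plug' he.symm rfl hsl
  exact hne r₀ W ec

theorem stepGood {V : Term → Option Term} {s : MState} {β : Label} {ops : List Op}
    {s' : MState} (h : Step V s β ops s') :
    Motive1 s.mem s.threads β s'.mem s'.threads := by
  refine Step.rec (V := V)
    (motive_1 := fun s β _ s' _ => Motive1 s.mem s.threads β s'.mem s'.threads)
    (motive_2 := fun s _ s' _ => Motive2 s.mem s.threads s'.mem s'.threads)
    ?_ ?_ ?_ ?_ ?_ ?_ ?_ ?_ ?_ ?_ ?_ ?_ ?_ ?_ ?_ ?_ ?_ ?_ ?_ ?_ ?_ ?_ ?_ ?_ ?_ h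
  -- permC
  · intro m m' P Q P' Q' β ops hPQ hP'Q' _ ih
    exact case_permC m m' P Q P' Q' β hPQ hP'Q' ih
  -- inChar
  · intro m P E t c
    exact genPlain m t (plug E .getChar) (plug E (.ret (.chr c))) P (.inpC c) rfl
  -- outChar
  · intro m P E t c
    exact genPlain m t (plug E (.putChar c)) (plug E (.ret .unit)) P (.outC c) rfl
  -- termIO
  · intro m P E t M N hTS
    exact genPlain m t (plug E M) (plug E N) P .tau rfl
  -- forkIO
  · intro m P E t t' M hfr
    exact case_forkIO m P E t t' M hfr
  -- termT
  · intro m P E t k M M' N hTS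
    refine genTx m m t (plug E M) (plug E M') N k P (fun _ _ _ hw => hw) ?_ ?_
    · intro E₀ r₀ he
      have := congrArg core he
      rw [core_plug, core_plug] at this
      exact (termStep_core hTS).1 r₀ this
    · intro E₀ r₀ W he
      have := congrArg core he
      rw [core_plug, core_plug] at this
      exact (termStep_core hTS).2 r₀ W this
  -- forkT
  · intro m P E t t' k M N hfr
    exact case_forkT m P E t t' k M N hfr
  -- newVar
  · intro m P E t k M N r h1 h2
    refine genTx m _ t (plug E (.newOTVar M)) (plug E (.ret (.loc r))) N k P ?_ ?_ ?_
    · intro r₀ X kk hw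
      show updFn m.work r (M, k) r₀ = _
      rw [updFn_ne _ _ (fun he => by rw [he, h2] at hw; cases hw)]
      exact hw
    · exact fun E₀ r₀ => plug_ne_read rfl (fun _ h => Term.noConfusion h)
    · exact fun E₀ r₀ W => plug_ne_write rfl (fun _ _ h => Term.noConfusion h)
  -- read1
  · intro m P E t k M N r h1 h2
    exact case_read1 m P E t k M N r h1
  -- read2
  · intro m P E t k j M N r hw
    exact case_read2 m P E t k j M N r hw
  -- write1
  · intro m P E t k M N r h1
    exact case_write1 m P E t k M N r h1
  -- write2
  · intro m P E t k j M M₀ N r hw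
    exact case_write2 m P E t k j M M₀ N r hw
  -- orElse1
  · intro m m' P Q₁ Q₂ E t k j M M' N N' R ops hR hstar ih
    exact case_inner m m' P Q₁ Q₂ E t k j (.orElse M M') M R N rfl
      (fun _ h => Term.noConfusion h) (fun _ _ h => Term.noConfusion h) ih
  -- orElse2
  · intro m m' P Q₁ Q₂ E t k j M M' N ops hstar ih
    refine genTx m m t (plug E (.orElse M M')) (plug E M') N k P (fun _ _ _ hw => hw) ?_ ?_
    · exact fun E₀ r₀ => plug_ne_read rfl (fun _ h => Term.noConfusion h)
    · exact fun E₀ r₀ W => plug_ne_write rfl (fun _ _ h => Term.noConfusion h)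
  -- isolatedR
  · intro m m' P Q₁ Q₂ E t k j M N N' R ops hR hstar ih
    exact case_inner m m' P Q₁ Q₂ E t k j (.isolated M) M R N rfl
      (fun _ h => Term.noConfusion h) (fun _ _ h => Term.noConfusion h) ih
  -- newTx
  · intro m t M N k hk
    exact case_newTx m t M N k
  -- commitTx
  · intro m t M N k
    refine genToPlain _ _ (.tx t (.ret M) N k) t (.bind (.ret M) N) (.co k)
      (fun h => Label.noConfusion h) ?_ rfl
    intro k₀ hk r X kk hne hw
    injection hk with e
    rw [← e] at hne
    have hw' : m.work r = some (X, kk) := hw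
    show cleanup k m.work r = _
    simp [cleanup, hw', hne]
  -- abort1
  · intro m t M N k rt hroot
    refine genToPlain _ _ (.tx t (.throw M) N k) t (.bind (.throw M) N) (.ab k t M)
      (fun h => Label.noConfusion h) ?_ rfl
    intro k₀ hk r X kk hne hw
    injection hk with e
    rw [← e] at hne
    have hw' : m.work r = some (X, kk) := hw
    show cleanup k m.work r = _
    simp [cleanup, hw', hne]
  -- abort2
  · intro m t t' M M' N k rt h1 h2
    refine genToPlain _ _ (.tx t' M' N k) t' (.bind (.throw M) N) (.abBar k t M)
      (fun h => Label.noConfusion h) ?_ rfl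
    intro k₀ hk r X kk hne hw
    injection hk with e
    rw [← e] at hne
    have hw' : m.work r = some (X, kk) := hw
    show cleanup k m.work r = _
    simp [cleanup, hw', hne]
  -- abort3
  · intro m t t' M M' N k rt h1 h2
    refine genToPlain _ _ (.tx t' M' N k) t' .retry (.abBar k t M)
      (fun h => Label.noConfusion h) ?_ rfl
    intro k₀ hk r X kk hne hw
    injection hk with e
    rw [← e] at hne
    have hw' : m.work r = some (X, kk) := hw
    show cleanup k m.work r = _
    simp [cleanup, hw', hne]
  -- mcastAb
  · intro m m' P P' Q Q' k t M ops₁ ops₂ h1 h2 ih1 ih2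
    exact case_mcast m m' P P' Q Q' (.ab k t M) (.abBar k t M)
      (fun h => Label.noConfusion h) (fun h => Label.noConfusion h) ih1 ih2
  -- mcastCo
  · intro m m' P P' Q Q' k ops₁ ops₂ h1 h2 ih1 ih2
    exact case_mcast m m' P P' Q Q' (.co k) (.co k)
      (fun h => Label.noConfusion h) (fun h => Label.noConfusion h) ih1 ih2
  -- mcastGroup
  · intro m m' P P' Q β k ops hstep hβtx hkQ ih
    exact case_group m m' P P' Q β k hβtx hkQ ih
  -- star refl
  · intro s
    exact star_refl s.mem s.threads
  -- star cons
  · intro s₁ s₂ s₃ ops₁ ops₂ h1 h2 ih1 ih2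
    exact star_cons s₁.mem s₂.mem s₃.mem s₁.threads s₂.threads s₃.threads ih1 ih2

end OTMProof

open OTMProof in
/-- A thread running inside a transaction can read or write a location only
    if, as a result of the transition, that location is claimed by its
    transaction: after any `Read1`, `Read2`, `Write1` or `Write2` transition
    performed by a thread of transaction `k` on location `r`, the working
    memory of the resulting state maps `r` to a pair `(M, j)` where `j` is
    the (possibly merged) transaction name of that thread in the resulting
    state.  Consequently, at most one active transaction issues operations
    on any given location. -/
theorem otm_access_implies_claim (V : Term → Option Term) :
    ∀ (m m' : Mem) (P P' : Family) (β : Label) (ops : List Op),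
      Step V ⟨m, P⟩ β ops ⟨m', P'⟩ →
      (Family.tids P).Nodup →
      -- a read of `r` by a thread of transaction `k` leaves `r` claimed by
      -- the thread's resulting transaction `j`
      ((∀ t E N k r M j,
          Thread.tx t (plug E (.readOTVar r)) N k ∈ P →
          Thread.tx t (plug E (.ret M)) N j ∈ P' →
          ∃ M', m'.work r = some (M', j)) ∧
      -- a write of `r` by a thread of transaction `k` leaves `r` claimed by
      -- the thread's resulting transaction `j`
       (∀ t E N k r M j,
          Thread.tx t (plug E (.writeOTVar r M)) N k ∈ P →
          Thread.tx t (plug E (.ret .unit)) N j ∈ P' →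
          ∃ M', m'.work r = some (M', j)) ∧
      -- hence at most one active transaction issues operations on any
      -- given location
       (∀ r j₁ j₂, AccessedIn P P' r j₁ → AccessedIn P P' r j₂ → j₁ = j₂)) := by
  intro m m' P P' β ops hstep hnd
  have H : Motive1 m P β m' P' := stepGood hstep
  obtain ⟨nd', wp, pers, htau, hnt⟩ := H hnd
  by_cases hβ : β = Label.tau
  · obtain ⟨ex, dr, dw⟩ := htau hβ
    have bullet1 : ∀ t E N k r M j,
        Thread.tx t (plug E (.readOTVar r)) N k ∈ P →
        Thread.tx t (plug E (.ret M)) N j ∈ P' →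
        ∃ M', m'.work r = some (M', j) := by
      intro t E N k r M j h1 h2
      rcases dr t E N k r h1 with ⟨k₂, hm⟩ | ⟨k₂, A, hm, M₂, hcl⟩
      · exfalso
        have he := tid_unique nd' hm h2 rfl
        injection he with _ e _ _
        exact Term.noConfusion (plug_left_inj e)
      · have he := tid_unique nd' hm h2 rfl
        injection he with _ _ _ e4
        exact ⟨M₂, by rw [← e4]; exact hcl⟩
    have bullet2 : ∀ t E N k r M j,
        Thread.tx t (plug E (.writeOTVar r M)) N k ∈ P →
        Thread.tx t (plug E (.ret .unit)) N j ∈ P' →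
        ∃ M', m'.work r = some (M', j) := by
      intro t E N k r M j h1 h2
      rcases dw t E N k r M h1 with ⟨k₂, hm⟩ | ⟨k₂, A, hm, M₂, hcl⟩
      · exfalso
        have he := tid_unique nd' hm h2 rfl
        injection he with _ e _ _
        exact Term.noConfusion (plug_left_inj e)
      · have he := tid_unique nd' hm h2 rfl
        injection he with _ _ _ e4
        exact ⟨M₂, by rw [← e4]; exact hcl⟩
    refine ⟨bullet1, bullet2, ?_⟩
    have claim : ∀ r j', AccessedIn P P' r j' → ∃ M', m'.work r = some (M', j') := by
      intro r j' ha
      rcases ha with ⟨t, E, N, k, M, h1, h2⟩ | ⟨t, E, N, k, M, h1, h2⟩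
      · exact bullet1 t E N k r M j' h1 h2
      · exact bullet2 t E N k r M j' h1 h2
    intro r j₁ j₂ ha1 ha2
    obtain ⟨M₁', hc1⟩ := claim r j₁ ha1
    obtain ⟨M₂', hc2⟩ := claim r j₂ ha2
    have := hc1.symm.trans hc2
    injection this with e
    exact congrArg Prod.snd e
  · obtain ⟨_, nr, nw⟩ := hnt hβ
    have noacc : ∀ r j', AccessedIn P P' r j' → False := by
      intro r j' ha
      rcases ha with ⟨t, E, N, k, M, h1, h2⟩ | ⟨t, E, N, k, M, h1, h2⟩
      · exact nr t E N k r M j' h1 h2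
      · exact nw t E N k r M j' h1 h2
    exact ⟨fun t E N k r M j h1 h2 => (nr t E N k r M j h1 h2).elim,
      fun t E N k r M j h1 h2 => (nw t E N k r M j h1 h2).elim,
      fun r j₁ j₂ ha1 _ => (noacc r j₁ ha1).elim⟩
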